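/- Let P be a finite set of positive integers, m = min P, and Q = {p - m : p ∈ P, p ≠ m} ∪ {m}. For any k ≥ 0, the word FW(Q,k) is a prefix of FW(P,k+m). -/
import Mathlib


/-- minimum of a finite set of naturals (as `sInf`). -/
noncomputable def mP (P : Finset ℕ) : ℕ := sInf (↑P : Set ℕ)

/-- the generating relation `∼_{P,k}` on `{0,…,k-1}`. -/
def simRel (P : Finset ℕ) (k i j : ℕ) : Prop :=
  i < k ∧ j < k ∧ (i % mP P = j % mP P ∨
    ∃ i' j', i' < k ∧ j' < k ∧ i' % mP P = i % mP P ∧ j' % mP P = j % mP P ∧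
      (max i' j' - min i' j') ∈ P)

/-- the class of `i` under the equivalence closure `≈_{P,k}`. -/
def cls (P : Finset ℕ) (k i : ℕ) : Set ℕ := {j | Relation.EqvGen (simRel P k) i j}

/-- the FW-word: `FW P k i = min [i]_{P,k}`. -/
noncomputable def FW (P : Finset ℕ) (k : ℕ) : ℕ → ℕ := fun i => sInf (cls P k i)

/-- Euclidean reduction `Q = {p - m : p ∈ P, p ≠ m} ∪ {m}`. -/
noncomputable def Qred (P : Finset ℕ) : Finset ℕ :=
  ((P.erase (mP P)).image (fun p => p - mP P)) ∪ {mP P}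

/-- `p` is a period of the word `w` of length `n`. -/
def HasPeriodF {A : Type*} (w : ℕ → A) (n p : ℕ) : Prop :=
  ∀ i, i + p < n → w i = w (i + p)

namespace Stmt6Aux

lemma mP_mem {P : Finset ℕ} (hP : P.Nonempty) : mP P ∈ P := by
  have h : (↑P : Set ℕ).Nonempty := by exact_mod_cast hP
  have := Nat.sInf_mem h
  exact_mod_cast this

lemma mP_le {P : Finset ℕ} {p : ℕ} (hp : p ∈ P) : mP P ≤ p :=
  Nat.sInf_le (by exact_mod_cast hp)

lemma mP_mem_Qred (P : Finset ℕ) : mP P ∈ Qred P :=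
  Finset.mem_union_right _ (Finset.mem_singleton_self _)

lemma sub_mem_Qred {P : Finset ℕ} {p : ℕ} (hp : p ∈ P) (hne : p ≠ mP P) :
    p - mP P ∈ Qred P :=
  Finset.mem_union_left _ (Finset.mem_image.mpr ⟨p, Finset.mem_erase.mpr ⟨hne, hp⟩, rfl⟩)

lemma mQ_mem (P : Finset ℕ) : mP (Qred P) ∈ Qred P :=
  mP_mem ⟨mP P, mP_mem_Qred P⟩

lemma mQ_cases {P : Finset ℕ} {q : ℕ} (hq : q ∈ Qred P) :
    q = mP P ∨ ∃ p ∈ P, mP P < p ∧ q = p - mP P := by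
  rcases Finset.mem_union.mp hq with h | h
  · rcases Finset.mem_image.mp h with ⟨p, hp, rfl⟩
    rcases Finset.mem_erase.mp hp with ⟨hne, hpP⟩
    exact Or.inr ⟨p, hpP, lt_of_le_of_ne (mP_le hpP) (Ne.symm hne), rfl⟩
  · exact Or.inl (Finset.mem_singleton.mp h)

lemma stepP_diff {P : Finset ℕ} {n x p : ℕ} (hp : p ∈ P) (hx : x + p < n) :
    simRel P n x (x + p) := by
  refine ⟨by omega, hx, Or.inr ⟨x, x + p, by omega, hx, rfl, rfl, ?_⟩⟩
  have h : max x (x + p) - min x (x + p) = p := by omega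
  rw [h]; exact hp

lemma stepP_mod {P : Finset ℕ} {n x y : ℕ} (hx : x < n) (hy : y < n)
    (h : x % mP P = y % mP P) : simRel P n x y := ⟨hx, hy, Or.inl h⟩

/-- A `Q`-difference step, simulated in `P` on the longer window. -/
lemma EP_of_Qdiff {P : Finset ℕ} (hP : P.Nonempty) {k x q : ℕ} (hq : q ∈ Qred P)
    (hxq : x + q < k) : Relation.EqvGen (simRel P (k + mP P)) x (x + q) := by
  rcases mQ_cases hq with rfl | ⟨p, hp, hlt, rfl⟩
  · exact .rel _ _ (stepP_diff (mP_mem hP) (by omega))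
  · have hsub : x + (p - mP P) + mP P = x + p := by omega
    have h1 : Relation.EqvGen (simRel P (k + mP P)) x (x + p) :=
      .rel _ _ (stepP_diff hp (by omega))
    have h2 : simRel P (k + mP P) (x + p) (x + (p - mP P)) := by
      refine stepP_mod (by omega) (by omega) ?_
      rw [← hsub]; exact Nat.add_mod_right _ _
    exact .trans _ _ _ h1 (.rel _ _ h2)

lemma EP_add_mul {P : Finset ℕ} (hP : P.Nonempty) {k x : ℕ} (t : ℕ)
    (h : x + t * mP (Qred P) < k) :
    Relation.EqvGen (simRel P (k + mP P)) x (x + t * mP (Qred P)) := by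
  induction t with
  | zero => simpa using Relation.EqvGen.refl x
  | succ t ih =>
    have e : x + (t + 1) * mP (Qred P) = (x + t * mP (Qred P)) + mP (Qred P) := by ring
    have hlt : x + t * mP (Qred P) < k := by omega
    refine .trans _ _ _ (ih hlt) ?_
    rw [e]
    exact EP_of_Qdiff hP (mQ_mem P) (by omega)

lemma EP_modQ {P : Finset ℕ} (hP : P.Nonempty) {k x y : ℕ} (hx : x < k) (hy : y < k)
    (h : x % mP (Qred P) = y % mP (Qred P)) :
    Relation.EqvGen (simRel P (k + mP P)) x y := by
  rcases le_total x y with hle | hle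
  · obtain ⟨t, ht⟩ := (Nat.modEq_iff_dvd' hle).mp h
    have hy' : y = x + t * mP (Qred P) := by
      have := Nat.mul_comm (mP (Qred P)) t; omega
    rw [hy']
    exact EP_add_mul hP t (by omega)
  · obtain ⟨t, ht⟩ := (Nat.modEq_iff_dvd' hle).mp h.symm
    have hx' : x = y + t * mP (Qred P) := by
      have := Nat.mul_comm (mP (Qred P)) t; omega
    refine .symm _ _ ?_
    rw [hx']
    exact EP_add_mul hP t (by omega)

lemma claimA {P : Finset ℕ} (hP : P.Nonempty) {k i j : ℕ} (h : simRel (Qred P) k i j) :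
    Relation.EqvGen (simRel P (k + mP P)) i j := by
  obtain ⟨hi, hj, h | ⟨i', j', hi', hj', hmi, hmj, hd⟩⟩ := h
  · exact EP_modQ hP hi hj h
  · refine .trans _ _ _ (EP_modQ hP hi hi' hmi.symm) (.trans _ _ _ ?_ (EP_modQ hP hj' hj hmj))
    rcases le_total i' j' with hle | hle
    · have hq : j' - i' ∈ Qred P := by
        have e : max i' j' - min i' j' = j' - i' := by omega
        rwa [e] at hd
      have e2 : j' = i' + (j' - i') := by omega
      rw [e2]
      exact EP_of_Qdiff hP hq (by omega)
    · have hq : i' - j' ∈ Qred P := by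
        have e : max i' j' - min i' j' = i' - j' := by omega
        rwa [e] at hd
      have e2 : i' = j' + (i' - j') := by omega
      exact .symm _ _ (by rw [e2]; exact EP_of_Qdiff hP hq (by omega))

/-- the folding map from `[0, k+m)` to `[0,k)` (up to isolated points). -/
def fmap (k m x : ℕ) : ℕ := if x < k then x else x - m

lemma EQ_fC1 {P : Finset ℕ} {k x : ℕ} (h : x + mP P < k + mP P) :
    Relation.EqvGen (simRel (Qred P) k) (fmap k (mP P) x) (fmap k (mP P) (x + mP P)) := by
  have hx : x < k := by omega
  by_cases h2 : x + mP P < k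
  · simp only [fmap, if_pos hx, if_pos h2]
    refine .rel _ _ ⟨hx, h2, Or.inr ⟨x, x + mP P, hx, h2, rfl, rfl, ?_⟩⟩
    have e : max x (x + mP P) - min x (x + mP P) = mP P := by omega
    rw [e]; exact mP_mem_Qred P
  · simp only [fmap, if_pos hx, if_neg h2]
    have e : x + mP P - mP P = x := by omega
    rw [e]
    exact .refl _

lemma EQ_add_mul {P : Finset ℕ} {k x : ℕ} (t : ℕ) (h : x + t * mP P < k + mP P) :
    Relation.EqvGen (simRel (Qred P) k) (fmap k (mP P) x) (fmap k (mP P) (x + t * mP P)) := by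
  induction t with
  | zero => simpa using Relation.EqvGen.refl (fmap k (mP P) x)
  | succ t ih =>
    have e : x + (t + 1) * mP P = (x + t * mP P) + mP P := by ring
    have hlt : x + t * mP P < k + mP P := by omega
    refine .trans _ _ _ (ih hlt) ?_
    rw [e]
    exact EQ_fC1 (by omega)

lemma EQ_modP {P : Finset ℕ} {k x y : ℕ} (hx : x < k + mP P) (hy : y < k + mP P)
    (h : x % mP P = y % mP P) :
    Relation.EqvGen (simRel (Qred P) k) (fmap k (mP P) x) (fmap k (mP P) y) := by
  rcases le_total x y with hle | hle
  · obtain ⟨t, ht⟩ := (Nat.modEq_iff_dvd' hle).mp h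
    have hy' : y = x + t * mP P := by
      have := Nat.mul_comm (mP P) t; omega
    rw [hy']
    exact EQ_add_mul t (by omega)
  · obtain ⟨t, ht⟩ := (Nat.modEq_iff_dvd' hle).mp h.symm
    have hx' : x = y + t * mP P := by
      have := Nat.mul_comm (mP P) t; omega
    refine .symm _ _ ?_
    rw [hx']
    exact EQ_add_mul t (by omega)

lemma EQ_fD {P : Finset ℕ} {k x p : ℕ} (hp : p ∈ P) (h : x + p < k + mP P) :
    Relation.EqvGen (simRel (Qred P) k) (fmap k (mP P) x) (fmap k (mP P) (x + p)) := by
  by_cases hpm : p = mP P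
  · rw [hpm]; rw [hpm] at h; exact EQ_fC1 h
  · have hlt : mP P < p := lt_of_le_of_ne (mP_le hp) (Ne.symm hpm)
    have hq : p - mP P ∈ Qred P := sub_mem_Qred hp hpm
    have hxq : x + (p - mP P) < k := by omega
    have hxk : x < k := by omega
    have step1 : simRel (Qred P) k x (x + (p - mP P)) := by
      refine ⟨hxk, hxq, Or.inr ⟨x, x + (p - mP P), hxk, hxq, rfl, rfl, ?_⟩⟩
      have e : max x (x + (p - mP P)) - min x (x + (p - mP P)) = p - mP P := by omega
      rw [e]; exact hq
    have step2 : Relation.EqvGen (simRel (Qred P) k)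
        (fmap k (mP P) (x + (p - mP P))) (fmap k (mP P) (x + (p - mP P) + mP P)) :=
      EQ_fC1 (by omega)
    have e2 : x + (p - mP P) + mP P = x + p := by omega
    rw [e2] at step2
    refine .trans _ _ _ ?_ step2
    have e3 : fmap k (mP P) x = x := if_pos hxk
    have e4 : fmap k (mP P) (x + (p - mP P)) = x + (p - mP P) := if_pos hxq
    rw [e3, e4]
    exact .rel _ _ step1

lemma claimB_step {P : Finset ℕ} {k x y : ℕ} (h : simRel P (k + mP P) x y) :
    Relation.EqvGen (simRel (Qred P) k) (fmap k (mP P) x) (fmap k (mP P) y) := by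
  obtain ⟨hx, hy, h | ⟨x', y', hx', hy', hmx, hmy, hd⟩⟩ := h
  · exact EQ_modP hx hy h
  · refine .trans _ _ _ (EQ_modP hx hx' hmx.symm) (.trans _ _ _ ?_ (EQ_modP hy' hy hmy))
    rcases le_total x' y' with hle | hle
    · have hq : y' - x' ∈ P := by
        have e : max x' y' - min x' y' = y' - x' := by omega
        rwa [e] at hd
      have e2 : y' = x' + (y' - x') := by omega
      rw [e2]
      exact EQ_fD hq (by omega)
    · have hq : x' - y' ∈ P := by
        have e : max x' y' - min x' y' = x' - y' := by omega
        rwa [e] at hd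
      have e2 : x' = y' + (x' - y') := by omega
      exact .symm _ _ (by rw [e2]; exact EQ_fD hq (by omega))

lemma EQ_le_EP {P : Finset ℕ} (hP : P.Nonempty) {k i j : ℕ}
    (h : Relation.EqvGen (simRel (Qred P) k) i j) :
    Relation.EqvGen (simRel P (k + mP P)) i j := by
  induction h with
  | rel x y h => exact claimA hP h
  | refl x => exact .refl x
  | symm x y _ ih => exact .symm _ _ ih
  | trans x y z _ _ ih1 ih2 => exact .trans _ _ _ ih1 ih2

lemma EP_to_EQf {P : Finset ℕ} {k i j : ℕ}
    (h : Relation.EqvGen (simRel P (k + mP P)) i j) :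
    Relation.EqvGen (simRel (Qred P) k) (fmap k (mP P) i) (fmap k (mP P) j) := by
  induction h with
  | rel x y h => exact claimB_step h
  | refl x => exact .refl _
  | symm x y _ ih => exact .symm _ _ ih
  | trans x y z _ _ ih1 ih2 => exact .trans _ _ _ ih1 ih2

end Stmt6Aux

theorem stmt6 (P : Finset ℕ) (hP : P.Nonempty) (hpos : ∀ p ∈ P, 0 < p) (k : ℕ) :
    ∀ i < k, FW (Qred P) k i = FW P (k + mP P) i := by
  intro i hi
  have hiP : i ∈ cls P (k + mP P) i := Relation.EqvGen.refl i
  have hiQ : i ∈ cls (Qred P) k i := Relation.EqvGen.refl i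
  have hjPmem : sInf (cls P (k + mP P) i) ∈ cls P (k + mP P) i := Nat.sInf_mem ⟨i, hiP⟩
  have hjPle : sInf (cls P (k + mP P) i) ≤ i := Nat.sInf_le hiP
  have hjPk : sInf (cls P (k + mP P) i) < k := lt_of_le_of_lt hjPle hi
  have h1 := Stmt6Aux.EP_to_EQf (k := k) hjPmem
  rw [show Stmt6Aux.fmap k (mP P) i = i from if_pos hi,
    show Stmt6Aux.fmap k (mP P) (sInf (cls P (k + mP P) i)) = sInf (cls P (k + mP P) i)
      from if_pos hjPk] at h1
  have h2 : sInf (cls (Qred P) k i) ≤ sInf (cls P (k + mP P) i) := Nat.sInf_le h1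
  have hjQmem : sInf (cls (Qred P) k i) ∈ cls (Qred P) k i := Nat.sInf_mem ⟨i, hiQ⟩
  have h3 : sInf (cls P (k + mP P) i) ≤ sInf (cls (Qred P) k i) :=
    Nat.sInf_le (Stmt6Aux.EQ_le_EP hP hjQmem)
  exact le_antisymm h2 h3
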